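/- Let r ≥ 2. The exponential generating function of the counts f_m^0 of m-tuples of nonzero elements of ZMod r summing to 0 equals (1/r)(exp((r-1)X) - exp(-X)) + exp(-X) as formal power series over ℚ. -/

import Mathlib

open PowerSeries

/-- `cyclicFac r m κ` is the number of `m`-tuples of nonzero elements of the
additive cyclic group `ZMod r` whose sum is `κ`. -/
noncomputable def cyclicFac (r m : ℕ) (κ : ZMod r) : ℕ :=
  Nat.card {t : Fin m → ZMod r // (∀ i, t i ≠ 0) ∧ ∑ i, t i = κ}

section Aux

open Finset

variable (r : ℕ) [NeZero r]

lemma cyclicFac_card (m : ℕ) (κ : ZMod r) :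
    cyclicFac r m κ =
      (univ.filter (fun t : Fin m → ZMod r => (∀ i, t i ≠ 0) ∧ ∑ i, t i = κ)).card := by
  rw [cyclicFac, Nat.card_eq_fintype_card, Fintype.card_subtype]

lemma total_card (m : ℕ) :
    (univ.filter (fun t : Fin m → ZMod r => ∀ i, t i ≠ 0)).card = (r - 1) ^ m := by
  rw [← Fintype.card_subtype]
  rw [Fintype.card_congr (Equiv.subtypePiEquivPi (p := fun (_ : Fin m) (x : ZMod r) => x ≠ 0))]
  rw [Fintype.card_pi]
  simp [Fintype.card_subtype_compl, Fintype.card_subtype_eq, ZMod.card]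

lemma snoc_card (m : ℕ) :
    (univ.filter (fun t : Fin (m+1) → ZMod r => (∀ i, t i ≠ 0) ∧ ∑ i, t i = 0)).card =
    (univ.filter (fun t : Fin m → ZMod r => (∀ i, t i ≠ 0) ∧ ∑ i, t i ≠ 0)).card := by
  apply Finset.card_bij (fun (s : Fin (m+1) → ZMod r) _ => fun i : Fin m => s i.castSucc)
  · intro s hs
    simp only [mem_filter, mem_univ, true_and] at hs ⊢
    refine ⟨fun i => hs.1 _, fun h => hs.1 (Fin.last m) ?_⟩
    have := hs.2
    rw [Fin.sum_univ_castSucc, h, zero_add] at this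
    exact this
  · intro a ha b hb hab
    simp only [mem_filter, mem_univ, true_and] at ha hb
    funext i
    induction i using Fin.lastCases with
    | last =>
      have h1 := ha.2
      have h2 := hb.2
      rw [Fin.sum_univ_castSucc] at h1 h2
      have : ∑ i : Fin m, a i.castSucc = ∑ i : Fin m, b i.castSucc := by
        exact Finset.sum_congr rfl fun i _ => congrFun hab i
      rw [this] at h1
      linear_combination h1 - h2
    | cast i => exact congrFun hab i
  · intro t ht
    simp only [mem_filter, mem_univ, true_and] at ht
    refine ⟨Fin.snoc t (-∑ i, t i), ?_, ?_⟩
    · simp only [mem_filter, mem_univ, true_and]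
      constructor
      · intro i
        induction i using Fin.lastCases with
        | last =>
            rw [Fin.snoc_last]
            simpa using ht.2
        | cast i => simpa [Fin.snoc_castSucc] using ht.1 i
      · rw [Fin.sum_univ_castSucc]
        simp [Fin.snoc_castSucc, Fin.snoc_last]
    · funext i; simp [Fin.snoc_castSucc]

lemma cyclicFac_rec (m : ℕ) :
    cyclicFac r (m+1) 0 + cyclicFac r m 0 = (r - 1) ^ m := by
  rw [cyclicFac_card, cyclicFac_card, snoc_card, ← total_card r m]
  rw [← Finset.filter_filter, ← Finset.filter_filter]
  have := Finset.card_filter_add_card_filter_not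
    (s := univ.filter (fun t : Fin m → ZMod r => ∀ i, t i ≠ 0))
    (fun t : Fin m → ZMod r => ∑ i, t i ≠ 0)
  simpa using this

lemma cyclicFac_zero : cyclicFac r 0 0 = 1 := by
  rw [cyclicFac_card]
  rw [Finset.card_eq_one]
  refine ⟨fun i => i.elim0, ?_⟩
  ext t
  simp [mem_filter, Subsingleton.elim t fun i => i.elim0, funext_iff, Fin.forall_iff]

lemma cyclicFac_formula (hr : 2 ≤ r) (m : ℕ) :
    (cyclicFac r m 0 : ℚ) = (((r : ℚ) - 1) ^ m + ((r : ℚ) - 1) * (-1) ^ m) / r := by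
  have hr0 : (r : ℚ) ≠ 0 := by positivity
  induction m with
  | zero => rw [cyclicFac_zero]; field_simp; push_cast; ring
  | succ m ih =>
    have h := cyclicFac_rec r m
    have h' : (cyclicFac r (m+1) 0 : ℚ) + cyclicFac r m 0 = ((r : ℚ) - 1) ^ m := by
      have : ((r - 1 : ℕ) : ℚ) = (r : ℚ) - 1 := by
        push_cast [Nat.cast_sub (by omega : 1 ≤ r)]; ring
      rw [← this]
      exact_mod_cast congrArg (Nat.cast : ℕ → ℚ) h
    rw [ih] at h'
    field_simp at h' ⊢
    ring_nf at h' ⊢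
    linarith [h']

end Aux

/-- For `r ≥ 2`, the exponential generating function of the counts `f_m^0` of
`m`-tuples of nonzero elements of `ZMod r` summing to `0` equals
`(1/r)(exp((r-1)X) - exp(-X)) + exp(-X)` in `ℚ[[X]]`. -/
theorem cyclicFac_egf_one (r : ℕ) (hr : 2 ≤ r) :
    PowerSeries.mk (fun m => (cyclicFac r m (0 : ZMod r) : ℚ) / m.factorial) =
      PowerSeries.C (1 / r : ℚ) *
        (PowerSeries.rescale ((r : ℚ) - 1) (PowerSeries.exp ℚ) -
          PowerSeries.rescale (-1 : ℚ) (PowerSeries.exp ℚ)) +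
      PowerSeries.rescale (-1 : ℚ) (PowerSeries.exp ℚ) := by
  haveI : NeZero r := ⟨by omega⟩
  ext n
  rw [PowerSeries.coeff_mk, cyclicFac_formula r hr n]
  simp only [map_add, map_sub, PowerSeries.coeff_C_mul, PowerSeries.coeff_rescale,
    PowerSeries.coeff_exp, Algebra.algebraMap_self, RingHom.id_apply]
  have h1 : (n.factorial : ℚ) ≠ 0 := by exact_mod_cast n.factorial_ne_zero
  have h2 : (r : ℚ) ≠ 0 := by positivity
  field_simp
  ring
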